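/- Let α ≠ 0 and suppose β² − α² ≤ (c₁/c) k a_θ α ≤ α² + β². Then for every γ < β²/α one has f_{α,β}'(γ) < 0 and for every γ > β²/α one has f_{α,β}'(γ) > 0 (the derivative taken at points γ ≠ β²/α, where f_{α,β} is differentiable with f_{α,β}'(γ)/2 = cγ + cα·sgn(αγ − β²) − c₁ k a_θ); consequently the minimum of f_{α,β} over ℝ is attained exactly at γ = β²/α. -/

import Mathlib

lemma quadDeriv (a b C x : ℝ) : HasDerivAt (fun t : ℝ => a*t^2 + b*t + C) (2*a*x + b) x := by
  have h1 : HasDerivAt (fun t:ℝ => t^2) (2*x) x := by simpa using hasDerivAt_pow 2 x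
  have h2 : HasDerivAt (fun t:ℝ => t) 1 x := hasDerivAt_id x
  have := ((h1.const_mul a).add (h2.const_mul b)).add_const C
  have e : 2*a*x + b = a*(2*x) + b*1 := by ring
  rw [e]; exact this

lemma epos_of_pos (a e : ℝ) (ha : 0 < a) (h : 0 < a * e) : 0 < e := by
  have := div_pos h ha
  rwa [mul_div_cancel_left₀ _ (ne_of_gt ha)] at this

lemma eneg_of_pos (a e : ℝ) (ha : 0 < a) (h : a * e < 0) : e < 0 := by
  have := div_neg_of_neg_of_pos h ha
  rwa [mul_div_cancel_left₀ _ (ne_of_gt ha)] at this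

lemma epos_of_neg (a e : ℝ) (ha : a < 0) (h : a * e < 0) : 0 < e := by
  have := div_pos_of_neg_of_neg h ha
  rwa [mul_div_cancel_left₀ _ (ne_of_lt ha)] at this

lemma eneg_of_neg (a e : ℝ) (ha : a < 0) (h : 0 < a * e) : e < 0 := by
  have := div_neg_of_pos_of_neg h ha
  rwa [mul_div_cancel_left₀ _ (ne_of_lt ha)] at this

theorem stmt7 (c₁ c₂ k θ eT : ℝ) (hc₁ : 0 < c₁) (hc₂ : 0 < c₂)
    (hθ : 0 ≤ θ ∧ θ < Real.pi) (heT : 0 ≤ eT)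
    (c aθ bθ : ℝ) (hc : c = c₁ + c₂)
    (haθ : aθ = Real.cos (2 * θ)) (hbθ : bθ = Real.sin (2 * θ))
    (f : ℝ → ℝ → ℝ → ℝ)
    (hf : ∀ α β γ : ℝ, f α β γ =
      c * (α ^ 2 + 2 * β ^ 2 + γ ^ 2) + 2 * c * |α * γ - β ^ 2|
        + 2 * c₁ * k * aθ * (α - γ) - 4 * c₁ * k * bθ * β + 2 * c₁ * k ^ 2 + eT)
    (Q : ℝ → ℝ → ℝ) (hQ : ∀ α β : ℝ, Q α β = ⨅ γ : ℝ, f α β γ)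
    (α β : ℝ) (hα : α ≠ 0)
    (hreg₁ : β ^ 2 - α ^ 2 ≤ (c₁ / c) * k * aθ * α)
    (hreg₂ : (c₁ / c) * k * aθ * α ≤ α ^ 2 + β ^ 2) :
    (∀ γ : ℝ, γ ≠ β ^ 2 / α →
      HasDerivAt (f α β) (2 * (c * γ + c * α * Real.sign (α * γ - β ^ 2) - c₁ * k * aθ)) γ) ∧
    (∀ γ : ℝ, γ < β ^ 2 / α →
      2 * (c * γ + c * α * Real.sign (α * γ - β ^ 2) - c₁ * k * aθ) < 0) ∧
    (∀ γ : ℝ, β ^ 2 / α < γ →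
      0 < 2 * (c * γ + c * α * Real.sign (α * γ - β ^ 2) - c₁ * k * aθ)) ∧
    (∀ γ : ℝ, f α β (β ^ 2 / α) ≤ f α β γ) ∧
    (∀ γ : ℝ, f α β γ = f α β (β ^ 2 / α) → γ = β ^ 2 / α) := by
  have hc0 : (0:ℝ) < c := by rw [hc]; linarith
  set K := c₁ * k * aθ with hK
  have H1c : c * (β ^ 2 - α ^ 2) ≤ K * α := by
    have h := mul_le_mul_of_nonneg_left hreg₁ hc0.le
    have h2 : c * ((c₁ / c) * k * aθ * α) = K * α := by field_simp [hK]; exact hK.symm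
    linarith [h2 ▸ h]
  have H2c : K * α ≤ c * (α ^ 2 + β ^ 2) := by
    have h := mul_le_mul_of_nonneg_left hreg₂ hc0.le
    have h2 : c * ((c₁ / c) * k * aθ * α) = K * α := by field_simp [hK]; exact hK.symm
    linarith [h2 ▸ h]
  -- derivative claim
  have hD : ∀ γ : ℝ, γ ≠ β ^ 2 / α →
      HasDerivAt (f α β) (2 * (c * γ + c * α * Real.sign (α * γ - β ^ 2) - K)) γ := by
    intro γ hγ
    have hne : α * γ - β ^ 2 ≠ 0 := by
      intro h
      apply hγ
      have : α * γ = β ^ 2 := by linarith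
      field_simp [hα, ← this, mul_comm]
      rw [mul_comm]; exact this
    rcases hne.lt_or_gt with hneg | hpos
    · have hs : Real.sign (α * γ - β ^ 2) = -1 := Real.sign_of_neg hneg
      have hev : ∀ᶠ x in nhds γ, α * x - β ^ 2 < 0 := by
        have ho : IsOpen {x : ℝ | α * x - β ^ 2 < 0} :=
          isOpen_lt (by continuity) continuous_const
        exact ho.eventually_mem hneg
      have hE : f α β =ᶠ[nhds γ] fun x =>
          c * x ^ 2 + (-2 * c * α - 2 * K) * x +
            (c * (α ^ 2 + 2 * β ^ 2) + 2 * c * β ^ 2 + 2 * K * α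
              - 4 * c₁ * k * bθ * β + 2 * c₁ * k ^ 2 + eT) := by
        filter_upwards [hev] with x hx
        rw [hf, abs_of_neg hx]
        ring
      have H := (quadDeriv c (-2 * c * α - 2 * K)
        (c * (α ^ 2 + 2 * β ^ 2) + 2 * c * β ^ 2 + 2 * K * α
          - 4 * c₁ * k * bθ * β + 2 * c₁ * k ^ 2 + eT) γ).congr_of_eventuallyEq hE
      rw [hs]
      have e : 2 * (c * γ + c * α * (-1) - K) = 2 * c * γ + (-2 * c * α - 2 * K) := by ring
      rw [e]; exact H
    · have hs : Real.sign (α * γ - β ^ 2) = 1 := Real.sign_of_pos hpos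
      have hev : ∀ᶠ x in nhds γ, 0 < α * x - β ^ 2 := by
        have ho : IsOpen {x : ℝ | 0 < α * x - β ^ 2} :=
          isOpen_lt continuous_const (by continuity)
        exact ho.eventually_mem hpos
      have hE : f α β =ᶠ[nhds γ] fun x =>
          c * x ^ 2 + (2 * c * α - 2 * K) * x +
            (c * (α ^ 2 + 2 * β ^ 2) - 2 * c * β ^ 2 + 2 * K * α
              - 4 * c₁ * k * bθ * β + 2 * c₁ * k ^ 2 + eT) := by
        filter_upwards [hev] with x hx
        rw [hf, abs_of_pos hx]
        ring
      have H := (quadDeriv c (2 * c * α - 2 * K)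
        (c * (α ^ 2 + 2 * β ^ 2) - 2 * c * β ^ 2 + 2 * K * α
          - 4 * c₁ * k * bθ * β + 2 * c₁ * k ^ 2 + eT) γ).congr_of_eventuallyEq hE
      rw [hs]
      have e : 2 * (c * γ + c * α * 1 - K) = 2 * c * γ + (2 * c * α - 2 * K) := by ring
      rw [e]; exact H
  -- negative derivative left of γ₀
  have hL : ∀ γ : ℝ, γ < β ^ 2 / α →
      2 * (c * γ + c * α * Real.sign (α * γ - β ^ 2) - K) < 0 := by
    intro γ hγ
    rcases hα.lt_or_gt with hneg | hpos
    · have h1 : β ^ 2 < γ * α := (lt_div_iff_of_neg hneg).mp hγ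
      have hs : Real.sign (α * γ - β ^ 2) = 1 :=
        Real.sign_of_pos (by linarith)
      rw [hs]
      have key : 0 < α * (c * γ + c * α * 1 - K) := by
        have h2 := mul_lt_mul_of_pos_left h1 hc0
        have e : α * (c * γ + c * α * 1 - K) = c * (γ * α) + c * α ^ 2 - K * α := by ring
        rw [e]; linarith [H2c]
      linarith [eneg_of_neg _ _ hneg key]
    · have h1 : γ * α < β ^ 2 := (lt_div_iff₀ hpos).mp hγ
      have hs : Real.sign (α * γ - β ^ 2) = -1 :=
        Real.sign_of_neg (by linarith)
      rw [hs]
      have key : α * (c * γ + c * α * (-1) - K) < 0 := by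
        have h2 := mul_lt_mul_of_pos_left h1 hc0
        have e : α * (c * γ + c * α * (-1) - K) = c * (γ * α) - c * α ^ 2 - K * α := by ring
        rw [e]; linarith [H1c]
      linarith [eneg_of_pos _ _ hpos key]
  have hR : ∀ γ : ℝ, β ^ 2 / α < γ →
      0 < 2 * (c * γ + c * α * Real.sign (α * γ - β ^ 2) - K) := by
    intro γ hγ
    rcases hα.lt_or_gt with hneg | hpos
    · have h1 : γ * α < β ^ 2 := (div_lt_iff_of_neg hneg).mp hγ
      have hs : Real.sign (α * γ - β ^ 2) = -1 :=
        Real.sign_of_neg (by linarith)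
      rw [hs]
      have key : α * (c * γ + c * α * (-1) - K) < 0 := by
        have h2 := mul_lt_mul_of_pos_left h1 hc0
        have e : α * (c * γ + c * α * (-1) - K) = c * (γ * α) - c * α ^ 2 - K * α := by ring
        rw [e]; linarith [H1c]
      linarith [epos_of_neg _ _ hneg key]
    · have h1 : β ^ 2 < γ * α := (div_lt_iff₀ hpos).mp hγ
      have hs : Real.sign (α * γ - β ^ 2) = 1 :=
        Real.sign_of_pos (by linarith)
      rw [hs]
      have key : 0 < α * (c * γ + c * α * 1 - K) := by
        have h2 := mul_lt_mul_of_pos_left h1 hc0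
        have e : α * (c * γ + c * α * 1 - K) = c * (γ * α) + c * α ^ 2 - K * α := by ring
        rw [e]; linarith [H2c]
      linarith [epos_of_pos _ _ hpos key]
  -- minimality with quadratic gap
  have hb' : |c * β ^ 2 - K * α| ≤ c * α ^ 2 := by
    rw [abs_le]
    constructor <;> nlinarith
  have hb : |c * (β ^ 2 / α) - K| ≤ c * |α| := by
    have hα' : (0:ℝ) < |α| := abs_pos.2 hα
    have h1 : c * (β ^ 2 / α) - K = (c * β ^ 2 - K * α) / α := by
      field_simp
    rw [h1, abs_div, div_le_iff₀ hα']
    calc |c * β ^ 2 - K * α| ≤ c * α ^ 2 := hb'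
      _ = c * |α| * |α| := by rw [mul_assoc, abs_mul_abs_self]; ring
  have hmin : ∀ γ : ℝ, f α β (β ^ 2 / α) + c * (γ - β ^ 2 / α) ^ 2 ≤ f α β γ := by
    intro γ
    rw [hf, hf]
    have e0 : α * (β ^ 2 / α) - β ^ 2 = 0 := by field_simp; ring
    have e1 : α * γ - β ^ 2 = α * (γ - β ^ 2 / α) := by field_simp
    rw [e0, abs_zero, e1, abs_mul]
    set t := γ - β ^ 2 / α with ht
    have hγeq : γ = t + β ^ 2 / α := by rw [ht]; ring
    have h1 : -(|t| * |c * (β ^ 2 / α) - K|) ≤ t * (c * (β ^ 2 / α) - K) := by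
      rw [← abs_mul]; exact neg_abs_le _
    have h2 : |t| * |c * (β ^ 2 / α) - K| ≤ |t| * (c * |α|) :=
      mul_le_mul_of_nonneg_left hb (abs_nonneg t)
    have h3 : 0 ≤ t * (c * (β ^ 2 / α) - K) + |t| * (c * |α|) := by linarith
    rw [hK] at h3
    rw [hγeq]
    linarith [h3]
  refine ⟨hD, hL, hR, ?_, ?_⟩
  · intro γ
    linarith [hmin γ, mul_nonneg hc0.le (sq_nonneg (γ - β ^ 2 / α))]
  · intro γ hγ
    have h := hmin γ
    rw [hγ] at h
    have h0 : (γ - β ^ 2 / α) ^ 2 ≤ 0 := by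
      have hcle : c * (γ - β ^ 2 / α) ^ 2 ≤ c * 0 := by linarith
      exact le_of_mul_le_mul_left (by linarith) hc0
    have h1 : (γ - β ^ 2 / α) ^ 2 = 0 := le_antisymm h0 (sq_nonneg _)
    have := pow_eq_zero_iff (n := 2) (by norm_num) |>.mp h1
    linarith
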